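/- In ONH_n, with ω_n := τ_{n-1}τ_{n-2}⋯τ_1 · σ_1(ω_{n-1}) (the element τ_w for the longest element w_n, with ω_1 = 1) and ξ_n := x_{n-1}x_{n-2}²⋯x_1^{n-1}, one has ω_n · ξ_n = 1 in the polynomial representation, and consequently ω_n ξ_n ω_n = ω_n in ONH_n, so that ξ_n ω_n and ω_n ξ_n are idempotents. -/

import Mathlib

noncomputable section

/-- The word `(n-1, …, 1, n-1, …, 2, …, n-1)` (in the letters `1, …, n-1`), which is the
chosen reduced expression of the longest element `w_n ∈ S_n` defining
`ω_n = τ_{n-1} τ_{n-2} ⋯ τ_1 · σ_1(ω_{n-1})`. -/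
def omegaWord (n : ℕ) : List ℕ :=
  (List.range' 1 (n - 1)).foldr (fun j acc => (List.range' j (n - j)).reverse ++ acc) []

namespace Aux15

def dch {M : Type*} [Monoid M] (f : ℕ → M) (a : ℕ) : ℕ → M
  | 0 => 1
  | l + 1 => f (a + l) * dch f a l

section Monoid
variable {M : Type*} [Monoid M]

@[simp] lemma dch_zero (f : ℕ → M) (a : ℕ) : dch f a 0 = 1 := rfl

lemma dch_succ (f : ℕ → M) (a l : ℕ) : dch f a (l + 1) = f (a + l) * dch f a l := rfl

lemma dch_split (f : ℕ → M) (a l1 l2 : ℕ) :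
    dch f a (l2 + l1) = dch f (a + l1) l2 * dch f a l1 := by
  induction l2 with
  | zero => simp
  | succ l ih =>
      have h1 : l + 1 + l1 = (l + l1) + 1 := by omega
      rw [h1, dch_succ, ih, dch_succ, ← mul_assoc]
      have h2 : a + (l + l1) = a + l1 + l := by omega
      rw [h2]

lemma dch_shift (f : ℕ → M) (a l : ℕ) : dch (fun i => f (i + 1)) a l = dch f (a + 1) l := by
  induction l with
  | zero => rfl
  | succ l ih =>
      rw [dch_succ, dch_succ, ih]
      have : a + l + 1 = a + 1 + l := by omega
      rw [this]

lemma prod_range'_reverse (f : ℕ → M) (a l : ℕ) :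
    (((List.range' a l).reverse).map f).prod = dch f a l := by
  induction l with
  | zero => rfl
  | succ l ih =>
      rw [List.range'_concat, List.reverse_append, List.reverse_singleton,
        List.singleton_append, List.map_cons, List.prod_cons, ih, dch_succ]
      norm_num

lemma omegaWord_zero : omegaWord 0 = [] := rfl
lemma omegaWord_one : omegaWord 1 = [] := rfl

lemma foldr_shift (c : ℕ) (L : List ℕ) :
    (L.map (· + 1)).foldr (fun j acc => (List.range' j (c + 1 - j)).reverse ++ acc) []
      = (L.foldr (fun j acc => (List.range' j (c - j)).reverse ++ acc) []).map (· + 1) := by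
  induction L with
  | nil => rfl
  | cons j L ih =>
      simp only [List.map_cons, List.foldr_cons, List.map_append, ih]
      rw [List.map_reverse]
      congr 2
      have h1 : c + 1 - (j + 1) = c - j := by omega
      rw [h1]
      have hf : ((· + 1) : ℕ → ℕ) = (fun x => 1 + x) := by funext x; omega
      rw [hf, List.map_add_range']
      congr 1
      omega

lemma omegaWord_succ (n : ℕ) :
    omegaWord (n + 1) = (List.range' 1 n).reverse ++ (omegaWord n).map (· + 1) := by
  cases n with
  | zero => rfl
  | succ m =>
      show (List.range' 1 (m + 1)).foldr
          (fun j acc => (List.range' j (m + 2 - j)).reverse ++ acc) [] = _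
      rw [List.range'_succ, List.foldr_cons]
      congr 1
      have h2 : List.range' 2 m = (List.range' 1 m).map (· + 1) := by
        have hf : ((· + 1) : ℕ → ℕ) = (fun x => 1 + x) := by funext x; omega
        rw [hf, List.map_add_range']
      rw [h2, foldr_shift (c := m + 1)]
      rfl

lemma mem_omegaWord : ∀ {n j : ℕ}, j ∈ omegaWord n → 1 ≤ j ∧ j + 1 ≤ n := by
  intro n
  induction n with
  | zero => intro j hj; simp [omegaWord_zero] at hj
  | succ n ih =>
      intro j hj
      rw [omegaWord_succ, List.mem_append] at hj
      rcases hj with hj | hj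
      · rw [List.mem_reverse, List.mem_range'_1] at hj
        omega
      · rw [List.mem_map] at hj
        obtain ⟨j', hj', rfl⟩ := hj
        have := ih hj'
        omega

lemma prod_omega_succ (f : ℕ → M) (n : ℕ) :
    ((omegaWord (n + 1)).map f).prod = dch f 1 n * ((omegaWord n).map fun j => f (j + 1)).prod := by
  rw [omegaWord_succ, List.map_append, List.prod_append, prod_range'_reverse, List.map_map]
  rfl

lemma Xi_succ (X : ℕ → M) (n : ℕ) :
    ((List.range n).map fun i => X (n - i) ^ (i + 1)).prod
      = ((List.range (n - 1)).map fun i => X (n - 1 - i + 1) ^ (i + 1)).prod * X 1 ^ n := by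
  cases n with
  | zero => simp
  | succ m =>
      rw [List.range_succ, List.map_append, List.prod_append]
      simp only [Nat.add_sub_cancel, List.map_cons, List.map_nil, List.prod_cons,
        List.prod_nil, mul_one]
      congr 2
      · have hm : List.map (fun i => X (m + 1 - i) ^ (i + 1)) (List.range m)
            = List.map (fun i => X (m - i + 1) ^ (i + 1)) (List.range m) := by
          apply List.map_congr_left
          intro i hi
          rw [List.mem_range] at hi
          congr 2
          omega
        rw [hm]
      · congr 2
        omega

end Monoid

section RingSide

variable {A : Type*} [Ring A]

lemma move_mul {x u v : A} {p q : ℕ} (hu : x * u = ((-1) ^ p : ℤ) • (u * x))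
    (hv : x * v = ((-1) ^ q : ℤ) • (v * x)) :
    x * (u * v) = ((-1) ^ (p + q) : ℤ) • (u * v * x) := by
  rw [← mul_assoc, hu, smul_mul_assoc, mul_assoc, hv, mul_smul_comm, smul_smul, ← pow_add,
    mul_assoc]

lemma move_symm {x z : A} {m : ℕ} (h : x * z = ((-1) ^ m : ℤ) • (z * x)) :
    z * x = ((-1) ^ m : ℤ) • (x * z) := by
  rw [h, smul_smul, ← pow_add]
  have h2 : ((-1 : ℤ)) ^ (m + m) = 1 := by
    rw [← two_mul, pow_mul]
    norm_num
  rw [h2, one_smul]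

lemma neg_form {u v : A} (h : u * v = -(v * u)) : u * v = ((-1) ^ 1 : ℤ) • (v * u) := by
  rw [pow_one, neg_one_zsmul, h]

lemma move_pow {x y : A} {m : ℕ} (h : x * y = ((-1) ^ m : ℤ) • (y * x)) (c : ℕ) :
    x * y ^ c = ((-1) ^ (c * m) : ℤ) • (y ^ c * x) := by
  induction c with
  | zero => simp
  | succ c ih =>
      rw [pow_succ]
      have h2 := move_mul ih h
      rw [h2]
      have h3 : c * m + m = (c + 1) * m := by ring
      rw [h3]

lemma move_pow_left {x z : A} {m : ℕ} (h : x * z = ((-1) ^ m : ℤ) • (z * x)) (c : ℕ) :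
    x ^ c * z = ((-1) ^ (c * m) : ℤ) • (z * x ^ c) :=
  move_symm (move_pow (move_symm h) c)

lemma move_dch {x : A} {f : ℕ → A} {a len : ℕ}
    (h : ∀ k, a ≤ k → k < a + len → x * f k = ((-1) ^ 1 : ℤ) • (f k * x)) :
    x * dch f a len = ((-1) ^ len : ℤ) • (dch f a len * x) := by
  induction len with
  | zero => simp
  | succ l ih =>
      rw [dch_succ]
      have h1 : x * f (a + l) = ((-1) ^ 1 : ℤ) • (f (a + l) * x) := h _ (by omega) (by omega)
      have h2 := move_mul h1 (ih fun k hk1 hk2 => h k hk1 (by omega))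
      rw [h2]
      have h3 : 1 + l = l + 1 := by omega
      rw [h3]

lemma move_assoc {x u : A} {m : ℕ} (h : x * u = ((-1) ^ m : ℤ) • (u * x)) (r : A) :
    x * (u * r) = ((-1) ^ m : ℤ) • (u * (x * r)) := by
  rw [← mul_assoc, h, smul_mul_assoc, mul_assoc]

structure Rels (X T : ℕ → A) (n : ℕ) : Prop where
  hXX : ∀ i j : ℕ, 1 ≤ i → i < j → j ≤ n → X j * X i = -(X i * X j)
  hTT : ∀ i j : ℕ, 1 ≤ i → 1 ≤ j → i + 1 < j → j + 1 ≤ n → T i * T j = -(T j * T i)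
  hXT : ∀ i j : ℕ, 1 ≤ i → i ≤ n → 1 ≤ j → j + 1 ≤ n → i ≠ j → i ≠ j + 1 →
    X i * T j = -(T j * X i)
  hT2 : ∀ j, 1 ≤ j → j + 1 ≤ n → T j * T j = 0
  hBr : ∀ j, 1 ≤ j → j + 2 ≤ n → T j * T (j + 1) * T j = -(T (j + 1) * T j * T (j + 1))
  hR1 : ∀ j, 1 ≤ j → j + 1 ≤ n → X j * T j - T j * X (j + 1) = 1
  hR2 : ∀ j, 1 ≤ j → j + 1 ≤ n → T j * X j - X (j + 1) * T j = 1

lemma Rels.shift {X T : ℕ → A} {n : ℕ} (h : Rels X T n) :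
    Rels (fun i => X (i + 1)) (fun i => T (i + 1)) (n - 1) where
  hXX i j h1 h2 h3 := h.hXX (i + 1) (j + 1) (by omega) (by omega) (by omega)
  hTT i j h1 h2 h3 h4 := h.hTT (i + 1) (j + 1) (by omega) (by omega) (by omega) (by omega)
  hXT i j h1 h2 h3 h4 h5 h6 :=
    h.hXT (i + 1) (j + 1) (by omega) (by omega) (by omega) (by omega) (by omega) (by omega)
  hT2 j h1 h2 := h.hT2 (j + 1) (by omega) (by omega)
  hBr j h1 h2 := h.hBr (j + 1) (by omega) (by omega)
  hR1 j h1 h2 := h.hR1 (j + 1) (by omega) (by omega)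
  hR2 j h1 h2 := h.hR2 (j + 1) (by omega) (by omega)

def TIdeal (T : ℕ → A) (n : ℕ) : Submodule A A :=
  Submodule.span A (T '' {j | 1 ≤ j ∧ j + 1 ≤ n})

lemma T_mem_TIdeal {T : ℕ → A} {n j : ℕ} (h1 : 1 ≤ j) (h2 : j + 1 ≤ n) :
    T j ∈ TIdeal T n :=
  Submodule.subset_span ⟨j, ⟨h1, h2⟩, rfl⟩

lemma mem_mul_left {J : Submodule A A} {y : A} (a : A) (h : y ∈ J) : a * y ∈ J := by
  simpa [smul_eq_mul] using J.smul_mem a h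

lemma mem_zsmul {J : Submodule A A} {y : A} (s : ℤ) (h : y ∈ J) : s • y ∈ J := by
  rw [zsmul_eq_mul]
  exact mem_mul_left _ h

lemma TIdeal_shift_le (T : ℕ → A) (n : ℕ) :
    TIdeal (fun j => T (j + 1)) (n - 1) ≤ TIdeal T n := by
  apply Submodule.span_le.2
  rintro _ ⟨j, ⟨h1, h2⟩, rfl⟩
  exact Submodule.subset_span ⟨j + 1, ⟨by omega, by omega⟩, rfl⟩

lemma span_mul_right {T : ℕ → A} {s : Set ℕ} {y z : A} {J : Submodule A A}
    (hy : y ∈ Submodule.span A (T '' s)) (hgen : ∀ j ∈ s, T j * z ∈ J) : y * z ∈ J := by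
  refine Submodule.span_induction (p := fun w _ => w * z ∈ J) ?_ ?_ ?_ ?_ hy
  · rintro _ ⟨j, hj, rfl⟩
    exact hgen j hj
  · simpa using J.zero_mem
  · intro u v _ _ hu hv
    rw [add_mul]
    exact J.add_mem hu hv
  · intro a u _ hu
    rw [smul_eq_mul, mul_assoc]
    exact mem_mul_left _ hu

lemma T_mul_Xpow {X T : ℕ → A} {j : ℕ} (hr : T j * X j = 1 + X (j + 1) * T j) (a : ℕ) :
    T j * X j ^ a
      = (∑ b ∈ Finset.range a, X (j + 1) ^ b * X j ^ (a - 1 - b)) + X (j + 1) ^ a * T j := by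
  induction a with
  | zero => simp
  | succ a ih =>
      rw [pow_succ', ← mul_assoc, hr, add_mul, one_mul, mul_assoc, ih, mul_add, Finset.mul_sum]
      rw [Finset.sum_range_succ']
      have e0 : X (j + 1) ^ 0 * X j ^ (a + 1 - 1 - 0) = X j ^ a := by
        simp
      rw [e0]
      have e1 : ∀ b ∈ Finset.range a,
          X (j + 1) * (X (j + 1) ^ b * X j ^ (a - 1 - b))
            = X (j + 1) ^ (b + 1) * X j ^ (a + 1 - 1 - (b + 1)) := by
        intro b hb
        rw [← mul_assoc, ← pow_succ']
        congr 2
        omega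
      rw [Finset.sum_congr rfl e1]
      rw [← mul_assoc, ← pow_succ']
      abel

theorem kill : ∀ (n : ℕ) {A : Type*} [Ring A] (X T : ℕ → A), Rels X T n →
    ∀ j, 1 ≤ j → j + 1 ≤ n → T j * ((omegaWord n).map T).prod = 0 := by
  intro n
  induction n with
  | zero =>
      intro A _ X T h j h1 h2
      omega
  | succ n ih =>
      intro A _ X T h j h1 h2
      rw [prod_omega_succ]
      set Om : A := ((omegaWord n).map fun i => T (i + 1)).prod with hOm
      rcases eq_or_lt_of_le (show j ≤ n by omega) with rfl | hj
      · -- j = n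
        have hd : dch T 1 j = T j * dch T 1 (j - 1) := by
          conv_lhs => rw [show j = (j - 1) + 1 by omega]
          rw [dch_succ]
          congr 2
          omega
        rw [hd, ← mul_assoc, ← mul_assoc, h.hT2 j h1 (by omega), zero_mul, zero_mul]
      · -- j < n
        have hTO : T (j + 1) * Om = 0 := by
          have hsh := h.shift
          simp only [Nat.add_sub_cancel] at hsh
          exact ih _ _ hsh j h1 (by omega)
        have hU : dch T 1 n
            = dch T (j + 2) (n - 1 - j) * (T (j + 1) * (T j * dch T 1 (j - 1))) := by
          have e1 : n = (n - 1 - j) + (j + 1) := by omega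
          calc dch T 1 n = dch T 1 ((n - 1 - j) + (j + 1)) := by rw [← e1]
            _ = dch T (1 + (j + 1)) (n - 1 - j) * dch T 1 (j + 1) := dch_split ..
            _ = dch T (j + 2) (n - 1 - j) * (T (j + 1) * (T j * dch T 1 (j - 1))) := by
                have e2 : 1 + (j + 1) = j + 2 := by omega
                have e5 : dch T 1 (j + 1) = T (j + 1) * (T j * dch T 1 (j - 1)) := by
                  have e3 : j + 1 = 2 + (j - 1) := by omega
                  conv_lhs => rw [e3, dch_split]
                  have e4 : 1 + (j - 1) = j := by omega
                  rw [e4]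
                  have e6 : dch T j 2 = T (j + 1) * (T j * 1) := rfl
                  rw [e6, mul_one, mul_assoc]
                rw [e2, e5]
        rw [hU]
        simp only [mul_assoc]
        set L : A := dch T 1 (j - 1) with hL
        -- move T j past the upper chain
        have m1 : ∀ k, j + 2 ≤ k → k < (j + 2) + (n - 1 - j) →
            T j * T k = ((-1) ^ 1 : ℤ) • (T k * T j) := by
          intro k hk1 hk2
          exact neg_form (h.hTT j k h1 (by omega) (by omega) (by omega))
        have M1 := move_dch (x := T j) m1
        rw [move_assoc M1]
        have hz : T j * (T (j + 1) * (T j * (L * Om))) = 0 := by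
          have step1 : T j * (T (j + 1) * (T j * (L * Om)))
              = (T j * T (j + 1) * T j) * (L * Om) := by
            simp only [mul_assoc]
          rw [step1, h.hBr j h1 (by omega)]
          have m2 : ∀ k, 1 ≤ k → k < 1 + (j - 1) →
              T (j + 1) * T k = ((-1) ^ 1 : ℤ) • (T k * T (j + 1)) := by
            intro k hk1 hk2
            refine neg_form ?_
            have := h.hTT k (j + 1) (by omega) (by omega) (by omega) (by omega)
            rw [this, neg_neg]
          have M2 := move_dch (x := T (j + 1)) m2
          have step2 : T (j + 1) * (L * Om) = ((-1) ^ (j - 1) : ℤ) • (L * (T (j + 1) * Om)) :=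
            move_assoc M2 Om
          rw [neg_mul, mul_assoc, mul_assoc, step2, hTO]
          simp
        rw [hz]
        simp

theorem chainFull : ∀ (len : ℕ) {A : Type*} [Ring A] (X T : ℕ → A) {n : ℕ}, Rels X T n →
    len + 1 ≤ n → ∀ a, a ≤ len →
    dch T 1 len * X 1 ^ a - (if a = len then 1 else 0) ∈ TIdeal T n := by
  intro len
  induction len with
  | zero =>
      intro A _ X T n h hlen a ha
      have : a = 0 := by omega
      subst this
      simpa using (TIdeal T n).zero_mem
  | succ len ih =>
      intro A _ X T n h hlen a ha
      have hn2 : 2 ≤ n := by omega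
      have hsplit : dch T 1 (len + 1) = dch T 2 len * (T 1 * 1) := by
        rw [dch_split T 1 1 len]
        rfl
      have hTx : T 1 * X 1 ^ a
          = (∑ b ∈ Finset.range a, X 2 ^ b * X 1 ^ (a - 1 - b)) + X 2 ^ a * T 1 :=
        T_mul_Xpow (sub_eq_iff_eq_add.mp (h.hR2 1 le_rfl hn2)) a
      have congrsum : (∑ b ∈ Finset.range a, (if b = len then (1 : A) else 0))
          = (if a = len + 1 then (1 : A) else 0) := by
        rw [Finset.sum_ite_eq' (Finset.range a) len (fun _ => (1 : A))]
        by_cases h1 : a = len + 1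
        · rw [if_pos h1, if_pos (by rw [Finset.mem_range]; omega)]
        · rw [if_neg h1, if_neg (by rw [Finset.mem_range]; omega)]
      have e : dch T 1 (len + 1) * X 1 ^ a - (if a = len + 1 then (1 : A) else 0)
          = (∑ b ∈ Finset.range a,
              (dch T 2 len * (X 2 ^ b * X 1 ^ (a - 1 - b)) - (if b = len then (1 : A) else 0)))
            + (dch T 2 len * X 2 ^ a) * T 1 := by
        rw [Finset.sum_sub_distrib, congrsum, hsplit, mul_one, mul_assoc, hTx, mul_add,
          Finset.mul_sum, ← mul_assoc (dch T 2 len)]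
        abel
      rw [e]
      have hsh := h.shift
      have hIH := ih (fun i => X (i + 1)) (fun i => T (i + 1)) hsh (by omega)
      refine (TIdeal T n).add_mem (Submodule.sum_mem _ ?_) ?_
      · intro b hb
        rw [Finset.mem_range] at hb
        by_cases hbl : b = len
        · subst hbl
          have hc : a - 1 - b = 0 := by omega
          rw [hc, pow_zero, mul_one, if_pos rfl]
          have h2 := hIH b le_rfl
          rw [if_pos rfl, dch_shift] at h2
          exact TIdeal_shift_le T n h2
        · rw [if_neg hbl, sub_zero]
          have hZ : dch T 2 len * X 2 ^ b ∈ TIdeal T n := by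
            have h2 := hIH b (by omega)
            rw [if_neg hbl, sub_zero, dch_shift] at h2
            exact TIdeal_shift_le T n h2
          have hx2 : X 1 * X 2 = ((-1) ^ 1 : ℤ) • (X 2 * X 1) := by
            refine neg_form ?_
            have := h.hXX 1 2 le_rfl (by omega) hn2
            rw [this, neg_neg]
          have hxT : ∀ k, 2 ≤ k → k < 2 + len →
              X 1 * T k = ((-1) ^ 1 : ℤ) • (T k * X 1) := by
            intro k hk1 hk2
            exact neg_form (h.hXT 1 k le_rfl (by omega) (by omega) (by omega)
              (by omega) (by omega))
          have hdchm := move_dch (x := X 1) hxT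
          have hpow2 := move_pow hx2 b
          have hZmove := move_mul hdchm hpow2
          have hcZ := move_pow_left hZmove (a - 1 - b)
          have hfin := move_symm hcZ
          rw [← mul_assoc, hfin]
          exact mem_zsmul _ (mem_mul_left _ hZ)
      · have hT1 : T 1 ∈ TIdeal T n := T_mem_TIdeal le_rfl hn2
        exact mem_mul_left _ hT1

theorem omega_xi : ∀ (n : ℕ) {A : Type*} [Ring A] (X T : ℕ → A), Rels X T n →
    ((omegaWord n).map T).prod * ((List.range (n - 1)).map fun i => X (n - 1 - i) ^ (i + 1)).prod
      - 1 ∈ TIdeal T n := by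
  intro n
  induction n with
  | zero =>
      intro A _ X T h
      simpa [omegaWord_zero] using (TIdeal T 0).zero_mem
  | succ n ih =>
      intro A _ X T h
      have hsh := h.shift
      simp only [Nat.add_sub_cancel] at hsh ⊢
      rw [prod_omega_succ, Xi_succ]
      set Om : A := ((omegaWord n).map fun i => T (i + 1)).prod with hOm
      set Xi : A := ((List.range (n - 1)).map fun i => X (n - 1 - i + 1) ^ (i + 1)).prod with hXi
      have hIH := ih (fun i => X (i + 1)) (fun i => T (i + 1)) hsh
      have hXi' : ((List.range (n - 1)).map fun i => X (n - 1 - i + 1) ^ (i + 1)).prod = Xi := rfl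
      have hy : Om * Xi - 1 ∈ TIdeal (fun i => T (i + 1)) n := hIH
      have hOmXi : Om * Xi = 1 + (Om * Xi - 1) := (sub_eq_iff_eq_add'.mp rfl)
      have key : dch T 1 n * Om * (Xi * X 1 ^ n)
          = (dch T 1 n * X 1 ^ n) + dch T 1 n * ((Om * Xi - 1) * X 1 ^ n) := by
        calc dch T 1 n * Om * (Xi * X 1 ^ n)
            = dch T 1 n * ((Om * Xi) * X 1 ^ n) := by simp only [mul_assoc]
          _ = dch T 1 n * ((1 + (Om * Xi - 1)) * X 1 ^ n) := by rw [← hOmXi]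
          _ = (dch T 1 n * X 1 ^ n) + dch T 1 n * ((Om * Xi - 1) * X 1 ^ n) := by
              rw [add_mul, one_mul, mul_add]
      rw [key]
      have part1 : dch T 1 n * X 1 ^ n - 1 ∈ TIdeal T (n + 1) := by
        have := chainFull n X T h le_rfl n le_rfl
        rwa [if_pos rfl] at this
      have part2 : dch T 1 n * ((Om * Xi - 1) * X 1 ^ n) ∈ TIdeal T (n + 1) := by
        refine mem_mul_left _ ?_
        refine span_mul_right hy ?_
        intro j hj
        obtain ⟨hj1, hj2⟩ := hj
        have hmove : T (j + 1) * X 1 = ((-1) ^ 1 : ℤ) • (X 1 * T (j + 1)) := by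
          refine neg_form ?_
          have := h.hXT 1 (j + 1) le_rfl (by omega) (by omega) (by omega) (by omega) (by omega)
          rw [this, neg_neg]
        have := move_pow hmove n
        rw [this]
        exact mem_zsmul _ (mem_mul_left _ (T_mem_TIdeal (by omega) (by omega)))
      have : dch T 1 n * X 1 ^ n + dch T 1 n * ((Om * Xi - 1) * X 1 ^ n) - 1
          = (dch T 1 n * X 1 ^ n - 1) + dch T 1 n * ((Om * Xi - 1) * X 1 ^ n) := by abel
      rw [this]
      exact (TIdeal T (n + 1)).add_mem part1 part2

theorem tideal_mul_omega {A : Type*} [Ring A] {X T : ℕ → A} {n : ℕ} (h : Rels X T n)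
    {y : A} (hy : y ∈ TIdeal T n) : y * ((omegaWord n).map T).prod = 0 := by
  refine Submodule.span_induction
    (p := fun w _ => w * ((omegaWord n).map T).prod = 0) ?_ ?_ ?_ ?_ hy
  · rintro _ ⟨j, ⟨hj1, hj2⟩, rfl⟩
    exact kill n X T h j hj1 hj2
  · show (0 : A) * _ = 0
    rw [zero_mul]
  · intro u v _ _ hu hv
    show (u + v) * _ = 0
    rw [add_mul, hu, hv, add_zero]
  · intro a u _ hu
    show (a • u) * _ = 0
    rw [smul_eq_mul, mul_assoc, hu, mul_zero]

theorem alg_main {A : Type*} [Ring A] (X T : ℕ → A) (n : ℕ) (h : Rels X T n) :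
    ((omegaWord n).map T).prod
        * ((List.range (n - 1)).map fun i => X (n - 1 - i) ^ (i + 1)).prod
        * ((omegaWord n).map T).prod
      = ((omegaWord n).map T).prod := by
  set om : A := ((omegaWord n).map T).prod
  set xi : A := ((List.range (n - 1)).map fun i => X (n - 1 - i) ^ (i + 1)).prod
  have hy := omega_xi n X T h
  have h0 := tideal_mul_omega h hy
  have : om * xi * om - om = (om * xi - 1) * om := by rw [sub_mul, one_mul]
  rw [h0] at this
  exact sub_eq_zero.mp this

end RingSide

section PolySide

structure PRels (k : Type*) [Field k] {P : Type*} [Ring P] [Algebra k P]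
    (x : ℕ → P) (S : ℕ → P ≃ₐ[k] P) (D : ℕ → AddMonoid.End P) (n : ℕ) : Prop where
  hS1 : ∀ j, 1 ≤ j → j + 1 ≤ n → S j (x j) = x (j + 1)
  hD : ∀ j i, 1 ≤ j → j + 1 ≤ n → 1 ≤ i → i ≤ n →
    D j (x i) = if i = j then 1 else if i = j + 1 then -1 else 0
  hL : ∀ j, 1 ≤ j → j + 1 ≤ n → ∀ f g : P, D j (f * g) = D j f * g + S j f * D j g

variable {k : Type*} [Field k] {P : Type*} [Ring P] [Algebra k P]
variable {x : ℕ → P} {S : ℕ → P ≃ₐ[k] P} {D : ℕ → AddMonoid.End P} {n : ℕ}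

lemma PRels.shift (h : PRels k x S D n) :
    PRels k (fun i => x (i + 1)) (fun j => S (j + 1)) (fun j => D (j + 1)) (n - 1) where
  hS1 j h1 h2 := h.hS1 (j + 1) (by omega) (by omega)
  hD j i h1 h2 h3 h4 := by
    have := h.hD (j + 1) (i + 1) (by omega) (by omega) (by omega) (by omega)
    simp only [this]
    congr 1 <;> [skip; congr 1] <;> simp <;> omega
  hL j h1 h2 f g := h.hL (j + 1) (by omega) (by omega) f g

lemma pD_one (h : PRels k x S D n) (j : ℕ) (hj1 : 1 ≤ j) (hj2 : j + 1 ≤ n) :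
    D j (1 : P) = 0 := by
  have h1 := h.hL j hj1 hj2 1 1
  simp only [mul_one, one_mul, map_one] at h1
  exact left_eq_add.mp h1

lemma pD_x_ne (h : PRels k x S D n) {j i : ℕ} (hj1 : 1 ≤ j) (hj2 : j + 1 ≤ n)
    (hi1 : 1 ≤ i) (hi2 : i ≤ n) (ne1 : i ≠ j) (ne2 : i ≠ j + 1) : D j (x i) = 0 := by
  rw [h.hD j i hj1 hj2 hi1 hi2, if_neg ne1, if_neg ne2]

lemma pD_xpow_ne (h : PRels k x S D n) {j i : ℕ} (hj1 : 1 ≤ j) (hj2 : j + 1 ≤ n)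
    (hi1 : 1 ≤ i) (hi2 : i ≤ n) (ne1 : i ≠ j) (ne2 : i ≠ j + 1) (c : ℕ) :
    D j (x i ^ c) = 0 := by
  induction c with
  | zero => rw [pow_zero]; exact pD_one h j hj1 hj2
  | succ c ih =>
      rw [pow_succ, h.hL j hj1 hj2, ih, pD_x_ne h hj1 hj2 hi1 hi2 ne1 ne2, zero_mul,
        mul_zero, add_zero]

lemma pD_mul_xpow (h : PRels k x S D n) {j i : ℕ} (hj1 : 1 ≤ j) (hj2 : j + 1 ≤ n)
    (hi1 : 1 ≤ i) (hi2 : i ≤ n) (ne1 : i ≠ j) (ne2 : i ≠ j + 1) (c : ℕ) (f : P) :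
    D j (f * x i ^ c) = D j f * x i ^ c := by
  rw [h.hL j hj1 hj2, pD_xpow_ne h hj1 hj2 hi1 hi2 ne1 ne2, mul_zero, add_zero]

lemma pD_xjpow (h : PRels k x S D n) {j : ℕ} (hj1 : 1 ≤ j) (hj2 : j + 1 ≤ n) (a : ℕ) :
    D j (x j ^ a) = ∑ b ∈ Finset.range a, x (j + 1) ^ b * x j ^ (a - 1 - b) := by
  induction a with
  | zero => rw [pow_zero, Finset.range_zero, Finset.sum_empty]; exact pD_one h j hj1 hj2
  | succ a ih =>
      have hDj : D j (x j) = 1 := by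
        rw [h.hD j j hj1 hj2 hj1 (by omega), if_pos rfl]
      rw [pow_succ, h.hL j hj1 hj2, ih, hDj, mul_one, map_pow, h.hS1 j hj1 hj2]
      rw [Finset.sum_mul, Finset.sum_range_succ]
      have e1 : ∀ b ∈ Finset.range a,
          x (j + 1) ^ b * x j ^ (a - 1 - b) * x j
            = x (j + 1) ^ b * x j ^ (a + 1 - 1 - b) := by
        intro b hb
        rw [Finset.mem_range] at hb
        rw [mul_assoc, ← pow_succ]
        congr 2
        omega
      rw [Finset.sum_congr rfl e1]
      congr 1
      simp

lemma dch_apply_mul_xpow (h : PRels k x S D n) {i : ℕ} (hi1 : 1 ≤ i) (hi2 : i ≤ n)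
    (a0 : ℕ) (len : ℕ)
    (hk : ∀ m, a0 ≤ m → m < a0 + len → 1 ≤ m ∧ m + 1 ≤ n ∧ i ≠ m ∧ i ≠ m + 1)
    (c : ℕ) (f : P) :
    dch D a0 len (f * x i ^ c) = dch D a0 len f * x i ^ c := by
  induction len with
  | zero => simp [AddMonoid.End.coe_one]
  | succ l ih =>
      rw [dch_succ, AddMonoid.End.coe_mul, Function.comp_apply, Function.comp_apply,
        ih (fun m hm1 hm2 => hk m hm1 (by omega))]
      obtain ⟨hm1, hm2, hm3, hm4⟩ := hk (a0 + l) (by omega) (by omega)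
      exact pD_mul_xpow h hm1 hm2 hi1 hi2 hm3 hm4 c _

lemma word_apply_mul_xpow (h : PRels k x S D n) {i : ℕ} (hi1 : 1 ≤ i) (hi2 : i ≤ n)
    (l : List ℕ) (hl : ∀ j ∈ l, 1 ≤ j ∧ j + 1 ≤ n ∧ i ≠ j ∧ i ≠ j + 1)
    (c : ℕ) (f : P) :
    ((l.map D).prod) (f * x i ^ c) = ((l.map D).prod) f * x i ^ c := by
  induction l with
  | nil => simp [AddMonoid.End.coe_one]
  | cons j l ih =>
      rw [List.map_cons, List.prod_cons, AddMonoid.End.coe_mul, Function.comp_apply,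
        Function.comp_apply, ih (fun m hm => hl m (List.mem_cons_of_mem j hm))]
      obtain ⟨hm1, hm2, hm3, hm4⟩ := hl j List.mem_cons_self
      exact pD_mul_xpow h hm1 hm2 hi1 hi2 hm3 hm4 c _

theorem chainD : ∀ (len : ℕ) {k : Type*} [Field k] {P : Type*} [Ring P] [Algebra k P]
    (x : ℕ → P) (S : ℕ → P ≃ₐ[k] P) (D : ℕ → AddMonoid.End P) {n : ℕ},
    PRels k x S D n → len + 1 ≤ n → ∀ a, a ≤ len →
    dch D 1 len (x 1 ^ a) = if a = len then 1 else 0 := by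
  intro len
  induction len with
  | zero =>
      intro k _ P _ _ x S D n h hlen a ha
      have : a = 0 := by omega
      subst this
      simp [AddMonoid.End.coe_one]
  | succ len ih =>
      intro k _ P _ _ x S D n h hlen a ha
      have hn2 : 2 ≤ n := by omega
      have hsplit : dch D 1 (len + 1) = dch D 2 len * dch D 1 1 := dch_split D 1 1 len
      rw [hsplit, AddMonoid.End.coe_mul, Function.comp_apply]
      have h11 : dch D 1 1 (x 1 ^ a) = D 1 (x 1 ^ a) := by
        show (D (1 + 0) * 1) (x 1 ^ a) = _
        rw [AddMonoid.End.coe_mul, Function.comp_apply, AddMonoid.End.coe_one]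
        rfl
      rw [h11, pD_xjpow h le_rfl hn2, map_sum]
      have e1 : ∀ b ∈ Finset.range a,
          dch D 2 len (x 2 ^ b * x 1 ^ (a - 1 - b))
            = (if b = len then (1 : P) else 0) * x 1 ^ (a - 1 - b) := by
        intro b hb
        rw [Finset.mem_range] at hb
        have hkk : ∀ m, 2 ≤ m → m < 2 + len → 1 ≤ m ∧ m + 1 ≤ n ∧ 1 ≠ m ∧ 1 ≠ m + 1 := by
          intro m hm1 hm2
          omega
        rw [dch_apply_mul_xpow h le_rfl (by omega) 2 len hkk]
        congr 1
        have hsh := h.shift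
        have hIH := ih (fun i => x (i + 1)) (fun j => S (j + 1)) (fun j => D (j + 1)) hsh
          (by omega) b (by omega)
        rw [dch_shift] at hIH
        exact hIH
      rw [Finset.sum_congr rfl e1]
      simp only [ite_mul, one_mul, zero_mul]
      rw [Finset.sum_ite_eq' (Finset.range a) len (fun b => x 1 ^ (a - 1 - b))]
      by_cases h1 : a = len + 1
      · rw [if_pos (by rw [Finset.mem_range]; omega), if_pos h1]
        have : a - 1 - len = 0 := by omega
        rw [this, pow_zero]
      · rw [if_neg (by rw [Finset.mem_range]; omega), if_neg h1]

theorem polyMain : ∀ (n : ℕ) {k : Type*} [Field k] {P : Type*} [Ring P] [Algebra k P]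
    (x : ℕ → P) (S : ℕ → P ≃ₐ[k] P) (D : ℕ → AddMonoid.End P),
    PRels k x S D n →
    (((omegaWord n).map D).prod)
        (((List.range (n - 1)).map fun i => x (n - 1 - i) ^ (i + 1)).prod) = 1 := by
  intro n
  induction n with
  | zero =>
      intro k _ P _ _ x S D h
      simp [omegaWord_zero, AddMonoid.End.coe_one]
  | succ n ih =>
      intro k _ P _ _ x S D h
      have hsh := h.shift
      simp only [Nat.add_sub_cancel] at hsh ⊢
      rw [prod_omega_succ D n, Xi_succ x n, AddMonoid.End.coe_mul, Function.comp_apply]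
      have hw : ((omegaWord n).map fun j => D (j + 1)).prod
          = (((omegaWord n).map (· + 1)).map D).prod := by
        rw [List.map_map]
        rfl
      rw [hw]
      have hl : ∀ j ∈ (omegaWord n).map (· + 1), 1 ≤ j ∧ j + 1 ≤ n + 1 ∧ 1 ≠ j ∧ 1 ≠ j + 1 := by
        intro j hj
        rw [List.mem_map] at hj
        obtain ⟨j', hj', rfl⟩ := hj
        have := mem_omegaWord hj'
        omega
      rw [word_apply_mul_xpow h le_rfl (by omega) _ hl]
      have hIH := ih (fun i => x (i + 1)) (fun j => S (j + 1)) (fun j => D (j + 1)) hsh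
      have hIH' : ((((omegaWord n).map (· + 1)).map D).prod)
          (((List.range (n - 1)).map fun i => x (n - 1 - i + 1) ^ (i + 1)).prod) = 1 := by
        rw [← hw]
        exact hIH
      rw [hIH', one_mul]
      have := chainD n x S D h (by omega) n le_rfl
      rw [if_pos rfl] at this
      exact this

end PolySide
end Aux15


/-- In `ONH_n`, with `ω_n = τ_{n-1} ⋯ τ_1 σ_1(ω_{n-1})` and
`ξ_n = x_{n-1} x_{n-2}² ⋯ x_1^{n-1}`, one has `ω_n · ξ_n = 1` in the polynomial
representation (first conjunct, formalized for any family of odd variables with odd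
Demazure operators `D j` satisfying their defining properties), and consequently
`ω_n ξ_n ω_n = ω_n` in `ONH_n`, so that `ξ_n ω_n` and `ω_n ξ_n` are idempotents
(second conjunct, formalized in any algebra with elements `X i, T j` satisfying the
defining relations of `ONH_n`). -/
theorem statement15 (k : Type*) [Field k] (n : ℕ) :
    (∀ (P : Type) [Ring P] [Algebra k P],
      ∀ (x : ℕ → P) (S : ℕ → P ≃ₐ[k] P) (D : ℕ → AddMonoid.End P),
        (∀ i j : ℕ, 1 ≤ i → i < j → j ≤ n → x j * x i = -(x i * x j)) →
        (∀ j, 1 ≤ j → j + 1 ≤ n → S j (x j) = x (j + 1)) →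
        (∀ j, 1 ≤ j → j + 1 ≤ n → S j (x (j + 1)) = x j) →
        (∀ j i, 1 ≤ j → j + 1 ≤ n → 1 ≤ i → i ≤ n → i ≠ j → i ≠ j + 1 →
          S j (x i) = -x i) →
        (∀ j i, 1 ≤ j → j + 1 ≤ n → 1 ≤ i → i ≤ n →
          D j (x i) = if i = j then 1 else if i = j + 1 then -1 else 0) →
        (∀ j, 1 ≤ j → j + 1 ≤ n → ∀ f g : P, D j (f * g) = D j f * g + S j f * D j g) →
        (((omegaWord n).map D).prod)
            (((List.range (n - 1)).map fun i => x (n - 1 - i) ^ (i + 1)).prod) = 1) ∧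
      ∀ (A : Type) [Ring A] [Algebra k A], ∀ X T : ℕ → A,
        (∀ i j : ℕ, 1 ≤ i → i < j → j ≤ n → X j * X i = -(X i * X j)) →
        (∀ i j : ℕ, 1 ≤ i → 1 ≤ j → i + 1 < j → j + 1 ≤ n → T i * T j = -(T j * T i)) →
        (∀ i j : ℕ, 1 ≤ i → i ≤ n → 1 ≤ j → j + 1 ≤ n → i ≠ j → i ≠ j + 1 →
          X i * T j = -(T j * X i)) →
        (∀ j, 1 ≤ j → j + 1 ≤ n → T j * T j = 0) →
        (∀ j, 1 ≤ j → j + 2 ≤ n →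
          T j * T (j + 1) * T j = -(T (j + 1) * T j * T (j + 1))) →
        (∀ j, 1 ≤ j → j + 1 ≤ n → X j * T j - T j * X (j + 1) = 1) →
        (∀ j, 1 ≤ j → j + 1 ≤ n → T j * X j - X (j + 1) * T j = 1) →
        (let ω : A := ((omegaWord n).map T).prod;
         let ξ : A := ((List.range (n - 1)).map fun i => X (n - 1 - i) ^ (i + 1)).prod;
         ω * ξ * ω = ω ∧ (ξ * ω) * (ξ * ω) = ξ * ω ∧ (ω * ξ) * (ω * ξ) = ω * ξ) := by
  constructor
  · intro P _ _ x S D hxx hs1 hs2 hs3 hd hl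
    exact Aux15.polyMain n x S D ⟨hs1, hd, hl⟩
  · intro A _ _ X T hxx htt hxt ht2 hbr hr1 hr2
    intro ω ξ
    have h : Aux15.Rels X T n := ⟨hxx, htt, hxt, ht2, hbr, hr1, hr2⟩
    have h1 : ω * ξ * ω = ω := Aux15.alg_main X T n h
    refine ⟨h1, ?_, ?_⟩
    · calc ξ * ω * (ξ * ω) = ξ * (ω * ξ * ω) := by simp only [mul_assoc]
        _ = ξ * ω := by rw [h1]
    · calc ω * ξ * (ω * ξ) = ω * ξ * ω * ξ := by simp only [mul_assoc]
        _ = ω * ξ := by rw [h1]
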